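/- For every real a > 0 and every real c, the function t ↦ Φ(−(a·t + c)) − 1{t < 0} is Lebesgue integrable on ℝ and ∫_{−∞}^{∞} [Φ(−(a·t + c)) − 1{t < 0}] dt = −c/a, where Φ is the standard normal cumulative distribution function and 1{t < 0} is the indicator of the set of negative reals. -/

import Mathlib

open MeasureTheory

/-- The standard normal cumulative distribution function
`Φ(x) = ∫_{−∞}^x (2π)^{−1/2} e^{−u²/2} du`. -/
noncomputable def stdNormalCDF (x : ℝ) : ℝ :=
  ∫ u in Set.Iic x, Real.exp (-u ^ 2 / 2) / Real.sqrt (2 * Real.pi)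

namespace PhiBoundaryAux

open Set Real

/-- Standard normal density. -/
noncomputable def φ (u : ℝ) : ℝ := Real.exp (-u ^ 2 / 2) / Real.sqrt (2 * Real.pi)

lemma φ_nonneg (u : ℝ) : 0 ≤ φ u := div_nonneg (Real.exp_pos _).le (Real.sqrt_nonneg _)

lemma φ_cont : Continuous φ := by
  unfold φ
  fun_prop

lemma φ_eq : φ = fun u => Real.exp (-(1/2) * u ^ 2) * (Real.sqrt (2 * Real.pi))⁻¹ := by
  funext u
  rw [φ, div_eq_mul_inv]
  ring_nf

lemma integrable_φ : Integrable φ := by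
  rw [φ_eq]
  exact (integrable_exp_neg_mul_sq (by norm_num)).mul_const _

lemma integral_φ : ∫ u, φ u = 1 := by
  rw [φ_eq, integral_mul_const, integral_gaussian,
    show Real.pi / (1/2) = 2 * Real.pi by ring]
  exact mul_inv_cancel₀ (Real.sqrt_ne_zero'.2 (by positivity))

lemma integrable_mul_φ : Integrable (fun u => u * φ u) := by
  rw [φ_eq]
  have : (fun u : ℝ => u * (Real.exp (-(1/2) * u ^ 2) * (Real.sqrt (2 * Real.pi))⁻¹))
      = fun u => (u * Real.exp (-(1/2) * u ^ 2)) * (Real.sqrt (2 * Real.pi))⁻¹ := by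
    funext u; ring
  rw [this]
  exact (integrable_mul_exp_neg_mul_sq (by norm_num)).mul_const _

lemma φ_even (u : ℝ) : φ (-u) = φ u := by simp [φ]

lemma integral_mul_φ : ∫ u, u * φ u = 0 := by
  have h := integral_neg_eq_self (fun v : ℝ => v * φ v) volume
  simp only [φ_even, neg_mul] at h
  rw [integral_neg] at h
  linarith

lemma integrable_abs_mul_φ : Integrable (fun u => |u| * φ u) := by
  have := integrable_mul_φ.norm
  refine this.congr (Filter.Eventually.of_forall fun u => ?_)
  simp only [Real.norm_eq_abs, abs_mul, abs_of_nonneg (φ_nonneg u)]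

end PhiBoundaryAux

open PhiBoundaryAux Set

/-- For `a > 0` and `c ∈ ℝ`, the function
`t ↦ Φ(−(a·t + c)) − 1{t < 0}` is Lebesgue integrable on `ℝ` and
`∫ (Φ(−(a·t + c)) − 1{t < 0}) dt = −c/a`. -/
theorem integral_Phi_boundary_layer (a c : ℝ) (ha : 0 < a) :
    Integrable (fun t : ℝ => stdNormalCDF (-(a * t + c)) - if t < 0 then 1 else 0) ∧
    (∫ t : ℝ, (stdNormalCDF (-(a * t + c)) - if t < 0 then 1 else 0)) = -c / a := by
  -- the "boundary" point as a function of u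
  set m : ℝ → ℝ := fun u => (-c - u) / a with hm
  -- the signed kernel: F (u, t)
  set S₁ : Set (ℝ × ℝ) := {q | 0 ≤ q.2 ∧ q.1 ≤ -(a * q.2 + c)} with hS₁def
  set S₂ : Set (ℝ × ℝ) := {q | q.2 < 0 ∧ -(a * q.2 + c) < q.1} with hS₂def
  set F : ℝ × ℝ → ℝ := fun p =>
    S₁.indicator (fun q => φ q.1) p - S₂.indicator (fun q => φ q.1) p with hFdef
  have hS₁ : MeasurableSet S₁ := by
    apply MeasurableSet.inter
    · exact measurableSet_le measurable_const measurable_snd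
    · exact measurableSet_le measurable_fst
        (((measurable_snd.const_mul a).add_const c).neg)
  have hS₂ : MeasurableSet S₂ := by
    apply MeasurableSet.inter
    · exact measurableSet_lt measurable_snd measurable_const
    · exact measurableSet_lt (((measurable_snd.const_mul a).add_const c).neg) measurable_fst
  have hφm : Measurable fun q : ℝ × ℝ => φ q.1 := φ_cont.measurable.comp measurable_fst
  have hFm : Measurable F := (hφm.indicator hS₁).sub (hφm.indicator hS₂)
  -- membership equivalences for slices in t
  have mem₁ : ∀ u t : ℝ, ((u, t) ∈ S₁) ↔ t ∈ Icc 0 (m u) := by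
    intro u t
    simp only [hS₁def, mem_setOf_eq, mem_Icc, hm, le_div_iff₀ ha]
    constructor <;> rintro ⟨h1, h2⟩ <;> exact ⟨h1, by nlinarith⟩
  have mem₂ : ∀ u t : ℝ, ((u, t) ∈ S₂) ↔ t ∈ Ioo (m u) 0 := by
    intro u t
    simp only [hS₂def, mem_setOf_eq, mem_Ioo, hm, div_lt_iff₀ ha]
    constructor <;> rintro ⟨h1, h2⟩ <;> refine ⟨by nlinarith, by nlinarith⟩
  -- slice of F at fixed u
  have slice_u : ∀ u : ℝ, (fun t => F (u, t)) =
      fun t => (Icc 0 (m u)).indicator (fun _ => φ u) t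
        - (Ioo (m u) 0).indicator (fun _ => φ u) t := by
    intro u
    funext t
    simp only [hFdef, Set.indicator_apply]
    rw [if_congr (mem₁ u t) rfl rfl, if_congr (mem₂ u t) rfl rfl]
  have integrable_slice_u : ∀ u : ℝ, Integrable (fun t => F (u, t)) := by
    intro u
    rw [slice_u u]
    apply Integrable.sub
    · exact (integrableOn_const measure_Icc_lt_top.ne).integrable_indicator
        measurableSet_Icc
    · exact (integrableOn_const measure_Ioo_lt_top.ne).integrable_indicator
        measurableSet_Ioo
  -- signed t-integral of a slice
  have int_slice_u : ∀ u : ℝ, (∫ t, F (u, t)) = φ u * m u := by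
    intro u
    rw [slice_u u]
    rw [integral_sub
      ((integrableOn_const measure_Icc_lt_top.ne).integrable_indicator measurableSet_Icc)
      ((integrableOn_const measure_Ioo_lt_top.ne).integrable_indicator measurableSet_Ioo),
      integral_indicator measurableSet_Icc, integral_indicator measurableSet_Ioo,
      setIntegral_const, setIntegral_const, measureReal_def, measureReal_def, Real.volume_Icc, Real.volume_Ioo]
    rcases le_or_gt 0 (m u) with h | h
    · rw [ENNReal.toReal_ofReal (by linarith), ENNReal.ofReal_of_nonpos (by linarith)]
      simp [mul_comm]
    · rw [ENNReal.ofReal_of_nonpos (by linarith), ENNReal.toReal_ofReal (by linarith)]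
      simp only [ENNReal.toReal_zero, zero_smul, smul_eq_mul, zero_sub]
      ring
  -- integral of the norm of a slice
  have norm_slice_u : ∀ u : ℝ, (∫ t, ‖F (u, t)‖) = φ u * |m u| := by
    intro u
    have : (fun t => ‖F (u, t)‖) =
        fun t => (Icc 0 (m u)).indicator (fun _ => φ u) t
          + (Ioo (m u) 0).indicator (fun _ => φ u) t := by
      funext t
      rw [congrFun (slice_u u) t]
      rcases le_or_gt 0 (m u) with h | h
      · rw [Ioo_eq_empty (by simp; linarith)]
        simp only [Set.indicator_empty, sub_zero, Pi.zero_apply, add_zero]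
        rw [Real.norm_eq_abs, abs_of_nonneg]
        exact Set.indicator_nonneg (fun _ _ => φ_nonneg u) t
      · rw [Icc_eq_empty (by simp; linarith)]
        simp only [Set.indicator_empty, Pi.zero_apply, zero_sub, zero_add, norm_neg]
        rw [Real.norm_eq_abs, abs_of_nonneg]
        exact Set.indicator_nonneg (fun _ _ => φ_nonneg u) t
    rw [this, integral_add
      ((integrableOn_const measure_Icc_lt_top.ne).integrable_indicator measurableSet_Icc)
      ((integrableOn_const measure_Ioo_lt_top.ne).integrable_indicator measurableSet_Ioo),
      integral_indicator measurableSet_Icc, integral_indicator measurableSet_Ioo,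
      setIntegral_const, setIntegral_const, measureReal_def, measureReal_def, Real.volume_Icc, Real.volume_Ioo]
    rcases le_or_gt 0 (m u) with h | h
    · rw [ENNReal.toReal_ofReal (by linarith), ENNReal.ofReal_of_nonpos (by linarith),
        abs_of_nonneg h]
      simp [mul_comm]
    · rw [ENNReal.ofReal_of_nonpos (by linarith), ENNReal.toReal_ofReal (by linarith),
        abs_of_neg h]
      simp only [ENNReal.toReal_zero, zero_smul, smul_eq_mul, zero_add]
      ring
  -- integrability of F on the product space
  have hF : Integrable F (volume.prod volume) := by
    refine (integrable_prod_iff hFm.aestronglyMeasurable).2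
      ⟨Filter.Eventually.of_forall integrable_slice_u, ?_⟩
    have heq : (fun u : ℝ => ∫ t, ‖F (u, t)‖) = fun u => φ u * |m u| := by
      funext u; exact norm_slice_u u
    rw [heq]
    have hbd : Integrable (fun u : ℝ => (|c| * φ u + |u| * φ u) * a⁻¹) :=
      ((integrable_φ.const_mul _).add integrable_abs_mul_φ).mul_const _
    refine hbd.mono' ?_ (Filter.Eventually.of_forall fun u => ?_)
    · exact (φ_cont.mul (continuous_abs.comp (by fun_prop))).aestronglyMeasurable
    · rw [Real.norm_eq_abs, abs_of_nonneg (mul_nonneg (φ_nonneg u) (abs_nonneg _)), hm]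
      have h1 : |(-c - u) / a| = |c + u| / a := by
        rw [abs_div, abs_of_pos ha, show -c - u = -(c + u) by ring, abs_neg]
      rw [h1]
      have h2 : |c + u| ≤ |c| + |u| := abs_add_le _ _
      have h3 : 0 ≤ φ u := φ_nonneg u
      rw [div_eq_mul_inv]
      have ha' : 0 ≤ a⁻¹ := by positivity
      nlinarith [mul_le_mul_of_nonneg_left h2 h3]
  -- the slice integral over u equals the target function
  have hg_eq : (fun t : ℝ => ∫ u, F (u, t)) =
      fun t : ℝ => stdNormalCDF (-(a * t + c)) - if t < 0 then 1 else 0 := by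
    funext t
    by_cases ht : t < 0
    · -- t < 0 : F (u, t) = - (Ioi (-(a*t+c))).indicator φ u
      have hsl : (fun u => F (u, t)) = fun u => -((Ioi (-(a * t + c))).indicator φ u) := by
        funext u
        have h1 : (u, t) ∉ S₁ := fun h => absurd h.1 (not_le.2 ht)
        have h2 : ((u, t) ∈ S₂) ↔ u ∈ Ioi (-(a * t + c)) := by
          simp only [hS₂def, mem_setOf_eq, mem_Ioi]
          exact ⟨fun h => h.2, fun h => ⟨ht, h⟩⟩
        simp only [hFdef, Set.indicator_apply]
        rw [if_congr h2 rfl rfl, if_neg h1]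
        ring
      rw [hsl, integral_neg, integral_indicator measurableSet_Ioi, if_pos ht]
      have hsplit : (∫ u in Iic (-(a * t + c)), φ u) + (∫ u in Ioi (-(a * t + c)), φ u)
          = ∫ u, φ u := intervalIntegral.integral_Iic_add_Ioi integrable_φ.integrableOn integrable_φ.integrableOn
      rw [integral_φ] at hsplit
      have hcdf : stdNormalCDF (-(a * t + c)) = ∫ u in Iic (-(a * t + c)), φ u := rfl
      rw [hcdf]
      linarith
    · -- 0 ≤ t : F (u, t) = (Iic (-(a*t+c))).indicator φ u
      push_neg at ht
      have hsl : (fun u => F (u, t)) = fun u => (Iic (-(a * t + c))).indicator φ u := by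
        funext u
        have h1 : (u, t) ∉ S₂ := fun h => absurd h.1 (not_lt.2 ht)
        have h2 : ((u, t) ∈ S₁) ↔ u ∈ Iic (-(a * t + c)) := by
          simp only [hS₁def, mem_setOf_eq, mem_Iic]
          exact ⟨fun h => h.2, fun h => ⟨ht, h⟩⟩
        simp only [hFdef, Set.indicator_apply]
        rw [if_congr h2 rfl rfl, if_neg h1]
        ring
      rw [hsl, integral_indicator measurableSet_Iic, if_neg (not_lt.2 ht), sub_zero]
      rfl
  constructor
  · rw [← hg_eq]
    exact hF.integral_prod_right
  · rw [← hg_eq]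
    have hswap : (∫ t, ∫ u, F (u, t)) = ∫ u, ∫ t, F (u, t) :=
      (integral_integral_swap (f := fun u t => F (u, t)) hF).symm
    rw [hswap]
    have : (fun u => ∫ t, F (u, t)) = fun u => (-c * φ u - u * φ u) * a⁻¹ := by
      funext u
      rw [int_slice_u u]
      show φ u * ((-c - u) / a) = _
      rw [div_eq_mul_inv]
      ring
    rw [this, integral_mul_const,
      integral_sub (integrable_φ.const_mul _) integrable_mul_φ,
      integral_const_mul, integral_φ, integral_mul_φ, div_eq_mul_inv]
    ring
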